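/- arXiv:2407.11649 — 3 statements merged into one kernel-verified Lean document; each statement's English description precedes it below -/
import Mathlib

section
/- Let π be a feedback strategy on the lattice Λ_N with |π(t,x)| ≤ c for all (t,x), and let (X̃^1, X̃^2) be the coupled process on ℝ^d × (hℤ^d) with generator 𝓛^π_t (the deterministic flow ẋ = π̂(t, X̃^2) coupled with the Markov chain with Kolmogorov matrix Q̂^N[π,·]), starting from (x̃^1_*, x̃^2_*). Then for every t ≥ 0, E|X̃^1_t − X̃^2_t|² ≤ |x̃^1_* − x̃^2_*|² + √d · c · N^{-1} · t. -/
open scoped BigOperators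
open MeasureTheory Filter

noncomputable section

abbrev Evec (d : ℕ) := EuclideanSpace ℝ (Fin d)

/-- The generator of the coupled deterministic/Markov-chain dynamics:
the deterministic flow `ẋ¹ = π(t, x²)` coupled with the continuous-time Markov chain
on the lattice `h·ℤ^d` (`h = 1/N`) jumping from `x²` to `x² + h·sgn(π_i(t,x²)) e_i`
with rate `h⁻¹ |π_i(t,x²)|`. -/
def gen (d N : ℕ) (π : ℝ → Evec d → Evec d) (φ : Evec d × Evec d → ℝ)
    (t : ℝ) (p : Evec d × Evec d) : ℝ :=
  fderiv ℝ (fun y => φ (y, p.2)) p.1 (π t p.2)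
    + ∑ i, (N : ℝ) * |π t p.2 i| *
        (φ (p.1, p.2 + (N : ℝ)⁻¹ • EuclideanSpace.single i (Real.sign (π t p.2 i))) - φ p)

lemma sign_mul_abs' (x : ℝ) : Real.sign x * |x| = x := by
  rcases lt_trichotomy x 0 with h|h|h
  · rw [Real.sign_of_neg h, abs_of_neg h]; ring
  · simp [h]
  · rw [Real.sign_of_pos h, abs_of_pos h]; ring

lemma sign_sq_mul_abs (x : ℝ) : Real.sign x ^ 2 * |x| = |x| := by
  rcases lt_trichotomy x 0 with h|h|h
  · rw [Real.sign_of_neg h]; ring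
  · simp [h]
  · rw [Real.sign_of_pos h]; ring

/-- The key generator computation: applied to the squared distance,
the generator equals `N⁻¹ ∑ᵢ |πᵢ|`. -/
lemma gen_sq_dist (d N : ℕ) [NeZero N] (π : ℝ → Evec d → Evec d)
    (t : ℝ) (p : Evec d × Evec d) :
    gen d N π (fun q => ‖q.1 - q.2‖ ^ 2) t p = (N : ℝ)⁻¹ * ∑ i, |π t p.2 i| := by
  obtain ⟨x₁, x₂⟩ := p
  set v : Evec d := π t x₂ with hv
  have hN : ((N : ℝ)) ≠ 0 := Nat.cast_ne_zero.2 (NeZero.ne N)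
  -- the derivative term
  have hd : HasFDerivAt (fun y : Evec d => ‖y - x₂‖ ^ 2)
      (2 • (innerSL ℝ (x₁ - x₂)).comp (ContinuousLinearMap.id ℝ (Evec d))) x₁ := by
    simpa using ((hasFDerivAt_id x₁).sub_const x₂).norm_sq
  have hin : (inner ℝ (x₁ - x₂) v : ℝ) = ∑ i, v i * (x₁ i - x₂ i) := by
    rw [real_inner_comm]
    simp [PiLp.inner_apply, RCLike.inner_apply, mul_comm]
  have hder : fderiv ℝ (fun y : Evec d => ‖y - x₂‖ ^ 2) x₁ v
      = 2 * ∑ i, v i * (x₁ i - x₂ i) := by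
    rw [hd.fderiv]
    simp only [ContinuousLinearMap.smul_apply, ContinuousLinearMap.coe_comp',
      Function.comp_apply, ContinuousLinearMap.coe_id', id_eq, innerSL_apply_apply, smul_eq_mul]
    rw [hin, two_smul]; ring
  -- the jump terms
  have hterm : ∀ i : Fin d,
      (N : ℝ) * |v i| *
        (‖x₁ - (x₂ + (N : ℝ)⁻¹ • EuclideanSpace.single i (Real.sign (v i)))‖ ^ 2
          - ‖x₁ - x₂‖ ^ 2)
      = -2 * (v i * (x₁ i - x₂ i)) + (N : ℝ)⁻¹ * |v i| := by
    intro i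
    have hw : x₁ - (x₂ + (N : ℝ)⁻¹ • EuclideanSpace.single i (Real.sign (v i)))
        = (x₁ - x₂) - (N : ℝ)⁻¹ • EuclideanSpace.single i (Real.sign (v i)) := by
      abel
    rw [hw, norm_sub_sq_real]
    have hinner : (inner ℝ (x₁ - x₂)
        ((N : ℝ)⁻¹ • EuclideanSpace.single i (Real.sign (v i))) : ℝ)
        = (N : ℝ)⁻¹ * (Real.sign (v i) * (x₁ i - x₂ i)) := by
      rw [real_inner_smul_right]
      simp [EuclideanSpace.inner_single_right, mul_comm]
    have hnorm : ‖(N : ℝ)⁻¹ • (EuclideanSpace.single i (Real.sign (v i)) : Evec d)‖ ^ 2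
        = (N : ℝ)⁻¹ ^ 2 * Real.sign (v i) ^ 2 := by
      rw [norm_smul, EuclideanSpace.norm_single]
      simp [mul_pow, sq_abs]
    rw [hinner, hnorm]
    have h1 : (N : ℝ) * (N : ℝ)⁻¹ = 1 := mul_inv_cancel₀ hN
    have h2 := sign_mul_abs' (v i)
    have h3 := sign_sq_mul_abs (v i)
    calc (N : ℝ) * |v i| * (‖x₁ - x₂‖ ^ 2 - 2 * ((N : ℝ)⁻¹ * (Real.sign (v i) * (x₁ i - x₂ i)))
            + (N : ℝ)⁻¹ ^ 2 * Real.sign (v i) ^ 2 - ‖x₁ - x₂‖ ^ 2)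
        = ((N : ℝ) * (N : ℝ)⁻¹) * (-2 * ((Real.sign (v i) * |v i|) * (x₁ i - x₂ i))
            + (N : ℝ)⁻¹ * (Real.sign (v i) ^ 2 * |v i|)) := by ring
      _ = -2 * (v i * (x₁ i - x₂ i)) + (N : ℝ)⁻¹ * |v i| := by rw [h1, h2, h3]; ring
  -- combine
  show fderiv ℝ (fun y : Evec d => ‖y - x₂‖ ^ 2) x₁ v
      + ∑ i, (N : ℝ) * |v i| *
        (‖x₁ - (x₂ + (N : ℝ)⁻¹ • EuclideanSpace.single i (Real.sign (v i)))‖ ^ 2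
          - ‖x₁ - x₂‖ ^ 2) = _
  rw [hder, Finset.sum_congr rfl fun i _ => hterm i, Finset.sum_add_distrib,
    ← Finset.mul_sum, ← Finset.mul_sum]
  ring

/-- ℓ¹–ℓ² bound: `∑ᵢ |xᵢ| ≤ √d ‖x‖`. -/
lemma sum_abs_le_sqrt_norm (d : ℕ) (x : Evec d) :
    ∑ i, |x i| ≤ Real.sqrt d * ‖x‖ := by
  have h1 : (∑ i, |x i|) ^ 2 ≤ (d : ℝ) * ∑ i, |x i| ^ 2 := by
    simpa using sq_sum_le_card_mul_sum_sq (s := (Finset.univ : Finset (Fin d)))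
      (f := fun i => |x i|)
  have h2 : ‖x‖ ^ 2 = ∑ i, |x i| ^ 2 := by
    rw [EuclideanSpace.norm_eq, Real.sq_sqrt (by positivity)]
    simp [sq_abs]
  have h3 : (∑ i, |x i|) ^ 2 ≤ (Real.sqrt d * ‖x‖) ^ 2 := by
    rw [mul_pow, Real.sq_sqrt (Nat.cast_nonneg d), h2]
    exact h1
  have h4 : 0 ≤ ∑ i, |x i| := Finset.sum_nonneg fun i _ => abs_nonneg _
  have h5 : 0 ≤ Real.sqrt d * ‖x‖ := by positivity
  nlinarith

/-- if `|π(t,x)| ≤ c` and `(X̃¹, X̃²)` solves the martingale problem for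
the coupling generator `𝓛^π_t` starting from `(x̃¹_*, x̃²_*)` (with `X̃²` lattice-valued),
then `E|X̃¹_t − X̃²_t|² ≤ |x̃¹_* − x̃²_*|² + √d · c · N⁻¹ · t` for all `t ≥ 0`. -/
theorem stmt3 (d N : ℕ) [NeZero N] (π : ℝ → Evec d → Evec d) (c : ℝ)
    (hπ : ∀ t x, ‖π t x‖ ≤ c)
    (Ω : Type*) [m0 : MeasurableSpace Ω] (P : Measure Ω) [IsProbabilityMeasure P]
    (F : Filtration ℝ m0)
    (X1 X2 : ℝ → Ω → Evec d) (x1s x2s : Evec d)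
    (hini : ∀ ω, X1 0 ω = x1s ∧ X2 0 ω = x2s)
    (hlat : ∀ t ω i, ∃ k : ℤ, (X2 t ω) i = (k : ℝ) / N)
    (hmart : ∀ φ : Evec d × Evec d → ℝ, ContDiff ℝ 1 φ →
      (∃ C : ℝ, ∀ p, |φ p| ≤ C * (1 + ‖p‖ ^ 2)) →
      Martingale (fun t ω => φ (X1 t ω, X2 t ω)
          - ∫ s in (0:ℝ)..t, gen d N π φ s (X1 s ω, X2 s ω)) F P) :
    ∀ t : ℝ, 0 ≤ t →
      (∫ ω, ‖X1 t ω - X2 t ω‖ ^ 2 ∂P)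
        ≤ ‖x1s - x2s‖ ^ 2 + Real.sqrt d * c * (N : ℝ)⁻¹ * t := by
  intro t ht
  have hc : 0 ≤ c := le_trans (norm_nonneg _) (hπ 0 0)
  set B : ℝ := Real.sqrt d * c * (N : ℝ)⁻¹ with hB
  have hB0 : 0 ≤ B := by positivity
  set φ : Evec d × Evec d → ℝ := fun q => ‖q.1 - q.2‖ ^ 2 with hφ
  have hφC1 : ContDiff ℝ 1 φ := (contDiff_fst.sub contDiff_snd).norm_sq ℝ
  have hφgr : ∃ C : ℝ, ∀ p, |φ p| ≤ C * (1 + ‖p‖ ^ 2) := by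
    refine ⟨4, fun p => ?_⟩
    have h1 : ‖p.1 - p.2‖ ≤ ‖p.1‖ + ‖p.2‖ := norm_sub_le _ _
    have h2 : ‖p.1‖ ≤ ‖p‖ := le_max_left _ _
    have h3 : ‖p.2‖ ≤ ‖p‖ := le_max_right _ _
    have h4 : ‖p.1 - p.2‖ ≤ 2 * ‖p‖ := by linarith
    have h5 : |φ p| = ‖p.1 - p.2‖ ^ 2 := abs_of_nonneg (by positivity)
    rw [h5]
    nlinarith [norm_nonneg (p.1 - p.2), norm_nonneg p]
  have M := hmart φ hφC1 hφgr
  set f : ℝ → Ω → ℝ := fun t ω => φ (X1 t ω, X2 t ω)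
      - ∫ s in (0:ℝ)..t, gen d N π φ s (X1 s ω, X2 s ω) with hf
  -- the generator term is bounded
  have hgen : ∀ s (ω : Ω), gen d N π φ s (X1 s ω, X2 s ω) = (N : ℝ)⁻¹ * ∑ i, |π s (X2 s ω) i| :=
    fun s ω => gen_sq_dist d N π s (X1 s ω, X2 s ω)
  have hgen_nonneg : ∀ s (ω : Ω), 0 ≤ gen d N π φ s (X1 s ω, X2 s ω) := by
    intro s ω; rw [hgen]
    exact mul_nonneg (by positivity) (Finset.sum_nonneg fun i _ => abs_nonneg _)
  have hgen_le : ∀ s (ω : Ω), gen d N π φ s (X1 s ω, X2 s ω) ≤ B := by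
    intro s ω; rw [hgen, hB]
    have h1 : ∑ i, |π s (X2 s ω) i| ≤ Real.sqrt d * ‖π s (X2 s ω)‖ :=
      sum_abs_le_sqrt_norm d _
    have h2 : Real.sqrt d * ‖π s (X2 s ω)‖ ≤ Real.sqrt d * c :=
      mul_le_mul_of_nonneg_left (hπ s _) (Real.sqrt_nonneg d)
    calc (N : ℝ)⁻¹ * ∑ i, |π s (X2 s ω) i| ≤ (N : ℝ)⁻¹ * (Real.sqrt d * c) := by
          exact mul_le_mul_of_nonneg_left (h1.trans h2) (by positivity)
      _ = Real.sqrt d * c * (N : ℝ)⁻¹ := by ring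
  -- the integrated generator term is in [0, B * t]
  have hA : ∀ ω : Ω, (∫ s in (0:ℝ)..t, gen d N π φ s (X1 s ω, X2 s ω)) ≤ B * t := by
    intro ω
    by_cases hint : IntervalIntegrable (fun s => gen d N π φ s (X1 s ω, X2 s ω))
        MeasureTheory.volume 0 t
    · calc (∫ s in (0:ℝ)..t, gen d N π φ s (X1 s ω, X2 s ω))
          ≤ ∫ _ in (0:ℝ)..t, B :=
            intervalIntegral.integral_mono_on ht hint intervalIntegrable_const
              (fun s _ => hgen_le s ω)
        _ = B * t := by
            rw [intervalIntegral.integral_const, smul_eq_mul, sub_zero, mul_comm]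
    · rw [intervalIntegral.integral_undef hint]
      positivity
  -- pointwise bound
  have hpw : ∀ ω, ‖X1 t ω - X2 t ω‖ ^ 2 ≤ f t ω + B * t := by
    intro ω
    have : ‖X1 t ω - X2 t ω‖ ^ 2
        = f t ω + ∫ s in (0:ℝ)..t, gen d N π φ s (X1 s ω, X2 s ω) := by
      simp [hf, hφ]
    rw [this]
    exact add_le_add_right (hA ω) _
  -- expectation of the martingale at time t equals its value at 0
  have hmean : ∫ ω, f t ω ∂P = ‖x1s - x2s‖ ^ 2 := by
    have h0 : ∀ ω, f 0 ω = ‖x1s - x2s‖ ^ 2 := by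
      intro ω
      simp [hf, hφ, (hini ω).1, (hini ω).2, intervalIntegral.integral_same]
    have hc0 := M.condExp_ae_eq (le_refl (0:ℝ)) |>.symm
    have := M.condExp_ae_eq (show (0:ℝ) ≤ t from ht)
    calc ∫ ω, f t ω ∂P = ∫ ω, (P[f t | F 0]) ω ∂P := (integral_condExp (F.le 0)).symm
      _ = ∫ ω, f 0 ω ∂P := integral_congr_ae this
      _ = ‖x1s - x2s‖ ^ 2 := by simp [h0]
  -- conclude
  by_cases hint : Integrable (fun ω => ‖X1 t ω - X2 t ω‖ ^ 2) P
  · have hfi : Integrable (fun ω => f t ω + B * t) P :=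
      (M.integrable t).add (integrable_const _)
    calc (∫ ω, ‖X1 t ω - X2 t ω‖ ^ 2 ∂P)
        ≤ ∫ ω, (f t ω + B * t) ∂P := integral_mono hint hfi hpw
      _ = (∫ ω, f t ω ∂P) + B * t := by
          rw [integral_add (M.integrable t) (integrable_const _)]
          simp
      _ = ‖x1s - x2s‖ ^ 2 + Real.sqrt d * c * (N : ℝ)⁻¹ * t := by
          rw [hmean]
  · rw [integral_undef hint]
    positivity
end
end

section
/- Let φ_{N,λ} : Λ_N → ℝ solve the discrete stationary Bellman equation λφ_{N,λ}(x) + 𝓗_N(x, (−Δ_N)φ_{N,λ}(x)) = 0 on Λ_N, and suppose λ|φ_{N,λ}(x)| ≤ c₀ for all x. Then for every x ∈ Λ_N and i ∈ {1,…,d}: |Δ^+_{N,i}φ_{N,λ}(x)| ≤ c₃ and |Δ^-_{N,i}φ_{N,λ}(x)| ≤ c₃, where c₃ := c₀ + sup_{x∈𝕋^d, |v|≤1} L(x,v). Consequently φ_{N,λ} is Lipschitz on Λ_N with a constant c₄ depending only on L and d. -/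
open scoped BigOperators RealInnerProductSpace
open MeasureTheory Filter

noncomputable section

def sgnz (a : ℝ) : ℤ := if 0 < a then 1 else if a < 0 then -1 else 0

def latE (d N : ℕ) (x : Fin d → ZMod N) : Evec d :=
  (WithLp.equiv 2 (Fin d → ℝ)).symm fun i => ((x i).val : ℝ) / N

def dplus {d N : ℕ} (φ : (Fin d → ZMod N) → ℝ) (x : Fin d → ZMod N) (i : Fin d) : ℝ :=
  (N : ℝ) * (φ (x + Pi.single i 1) - φ x)

def dminus {d N : ℕ} (φ : (Fin d → ZMod N) → ℝ) (x : Fin d → ZMod N) (i : Fin d) : ℝ :=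
  (N : ℝ) * (φ (x - Pi.single i 1) - φ x)

def DeltaN {d N : ℕ} (φ : (Fin d → ZMod N) → ℝ) (x : Fin d → ZMod N) : Fin d → ℝ × ℝ :=
  fun i => (dplus φ x i, dminus φ x i)

def negDeltaN {d N : ℕ} (φ : (Fin d → ZMod N) → ℝ) (x : Fin d → ZMod N) : Fin d → ℝ × ℝ :=
  fun i => (-dplus φ x i, -dminus φ x i)

def pairL {d : ℕ} (ξ : Fin d → ℝ × ℝ) (v : Evec d) : ℝ :=
  ∑ i, ((ξ i).1 * max (v i) 0 + (ξ i).2 * max (-(v i)) 0)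

def QN {d N : ℕ} (v : Evec d) (x y : Fin d → ZMod N) : ℝ :=
  (∑ i, if y = x + Pi.single i ((sgnz (v i) : ZMod N)) then (N : ℝ) * |v i| else 0)
    - (if y = x then (N : ℝ) * ∑ i, |v i| else 0)

def HNlat {d N : ℕ} (L : Evec d → Evec d → ℝ) (x : Fin d → ZMod N)
    (ξ : Fin d → ℝ × ℝ) : ℝ :=
  ⨆ v : Evec d, (pairL ξ v - L (latE d N x) v)

def latDist (d N : ℕ) (x y : Fin d → ZMod N) : ℝ :=
  sInf {r : ℝ | ∃ k : Fin d → ℤ, (∀ i, ((k i : ZMod N) = y i - x i)) ∧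
    r = Real.sqrt (∑ i, ((k i : ℝ) / N) ^ 2)}

lemma stmt8_abs_apply_le_norm {d : ℕ} (v : Evec d) (i : Fin d) : |v i| ≤ ‖v‖ := by
  rw [EuclideanSpace.norm_eq, ← Real.sqrt_sq_eq_abs]
  apply Real.sqrt_le_sqrt
  calc v i ^ 2 = ‖v i‖ ^ 2 := by rw [Real.norm_eq_abs, sq_abs]
    _ ≤ _ := Finset.single_le_sum (f := fun j => ‖v j‖ ^ 2) (fun j _ => sq_nonneg _)
        (Finset.mem_univ i)

lemma stmt8_pairL_single_pos {d : ℕ} (ξ : Fin d → ℝ × ℝ) (i : Fin d) :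
    pairL ξ (EuclideanSpace.single i (1:ℝ)) = (ξ i).1 := by
  rw [pairL, Finset.sum_eq_single i]
  · simp [EuclideanSpace.single_apply]
  · intro j _ hj
    simp [EuclideanSpace.single_apply, hj]
  · simp

lemma stmt8_pairL_single_neg {d : ℕ} (ξ : Fin d → ℝ × ℝ) (i : Fin d) :
    pairL ξ (EuclideanSpace.single i (-1:ℝ)) = (ξ i).2 := by
  rw [pairL, Finset.sum_eq_single i]
  · simp [EuclideanSpace.single_apply]
  · intro j _ hj
    simp [EuclideanSpace.single_apply, hj]
  · simp

lemma stmt8_pairL_le {d : ℕ} (ξ : Fin d → ℝ × ℝ) (v : Evec d) :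
    pairL ξ v ≤ (∑ i, (|(ξ i).1| + |(ξ i).2|)) * ‖v‖ := by
  rw [pairL, Finset.sum_mul]
  apply Finset.sum_le_sum
  intro i _
  have hv : max (v i) 0 ≤ ‖v‖ :=
    max_le ((le_abs_self _).trans (stmt8_abs_apply_le_norm v i)) (norm_nonneg v)
  have hv' : max (-(v i)) 0 ≤ ‖v‖ :=
    max_le ((neg_le_abs _).trans (stmt8_abs_apply_le_norm v i)) (norm_nonneg v)
  have h1 : (ξ i).1 * max (v i) 0 ≤ |(ξ i).1| * ‖v‖ :=
    mul_le_mul (le_abs_self _) hv (le_max_right _ _) (abs_nonneg _)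
  have h2 : (ξ i).2 * max (-(v i)) 0 ≤ |(ξ i).2| * ‖v‖ :=
    mul_le_mul (le_abs_self _) hv' (le_max_right _ _) (abs_nonneg _)
  calc (ξ i).1 * max (v i) 0 + (ξ i).2 * max (-(v i)) 0 ≤ |(ξ i).1| * ‖v‖ + |(ξ i).2| * ‖v‖ :=
        add_le_add h1 h2
    _ = (|(ξ i).1| + |(ξ i).2|) * ‖v‖ := by ring

lemma stmt8_bddAbove {d N : ℕ} (L : Evec d → Evec d → ℝ) (g : ℝ → ℝ)
    (hsl : ∀ a : ℝ, 0 ≤ a → ∀ (x v : Evec d), a * ‖v‖ + g a ≤ L x v)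
    (x : Fin d → ZMod N) (ξ : Fin d → ℝ × ℝ) :
    BddAbove (Set.range fun v : Evec d => pairL ξ v - L (latE d N x) v) := by
  set A : ℝ := ∑ i, (|(ξ i).1| + |(ξ i).2|) with hA
  have hA0 : 0 ≤ A := Finset.sum_nonneg fun i _ => by positivity
  refine ⟨-g A, ?_⟩
  rintro r ⟨v, rfl⟩
  have h1 := stmt8_pairL_le ξ v
  have h2 := hsl A hA0 (latE d N x) v
  simp only
  linarith

set_option maxHeartbeats 1000000 in
/-- a solution `φ_{N,λ}` of the discrete Bellman equation with
`λ|φ_{N,λ}| ≤ c₀` has all one-sided difference quotients bounded by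
`c₃ := c₀ + sup_{x,|v|≤1} L(x,v)`, and consequently is Lipschitz on `Λ_N`
with a constant `c₄` depending only on `L` and `d`. -/
theorem stmt8 (d : ℕ) (L : Evec d → Evec d → ℝ) (g : ℝ → ℝ)
    (hLc : Continuous (Function.uncurry L))
    (hconv : ∀ x : Evec d, ConvexOn ℝ Set.univ (L x))
    (hsl : ∀ a : ℝ, 0 ≤ a → ∀ (x v : Evec d), a * ‖v‖ + g a ≤ L x v)
    (hper : ∀ (x v : Evec d) (i : Fin d), L (x + EuclideanSpace.single i 1) v = L x v)
    (hbdd : BddAbove {r : ℝ | ∃ (x v : Evec d), ‖v‖ ≤ 1 ∧ r = L x v})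
    (c0 c3 : ℝ) (hc0 : 0 ≤ c0)
    (hc3 : c3 = c0 + sSup {r : ℝ | ∃ (x v : Evec d), ‖v‖ ≤ 1 ∧ r = L x v}) :
    ∃ c4 : ℝ, ∀ (N : ℕ) (lam : ℝ), 0 < lam →
      ∀ φ : (Fin d → ZMod (N + 1)) → ℝ,
        (∀ x, lam * φ x + HNlat L x (negDeltaN φ x) = 0) →
        (∀ x, lam * |φ x| ≤ c0) →
        (∀ x i, |dplus φ x i| ≤ c3 ∧ |dminus φ x i| ≤ c3) ∧
        (∀ x y, |φ x - φ y| ≤ c4 * latDist d (N + 1) x y) := by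
  refine ⟨Real.sqrt d * max c3 0, ?_⟩
  intro N lam hlam φ heq hbd
  have hN1pos : (0 : ℝ) < ((N + 1 : ℕ) : ℝ) := by positivity
  -- one-sided bounds
  have key : ∀ (x : Fin d → ZMod (N+1)) (i : Fin d),
      -dplus φ x i ≤ c3 ∧ -dminus φ x i ≤ c3 := by
    intro x i
    have hH : HNlat L x (negDeltaN φ x) ≤ c0 := by
      have h1 := heq x
      have h2 := hbd x
      have h3 : -(lam * φ x) ≤ lam * |φ x| := by
        rw [← mul_neg]
        exact mul_le_mul_of_nonneg_left (neg_le_abs _) hlam.le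
      linarith
    have hba := stmt8_bddAbove L g hsl x (negDeltaN φ x)
    have hLmem : ∀ v : Evec d, ‖v‖ ≤ 1 → L (latE d (N+1) x) v ≤
        sSup {r : ℝ | ∃ (x v : Evec d), ‖v‖ ≤ 1 ∧ r = L x v} :=
      fun v hv => le_csSup hbdd ⟨latE d (N+1) x, v, hv, rfl⟩
    constructor
    · have hle : pairL (negDeltaN φ x) (EuclideanSpace.single i (1:ℝ))
          - L (latE d (N+1) x) (EuclideanSpace.single i (1:ℝ)) ≤ HNlat L x (negDeltaN φ x) :=
        le_ciSup hba _
      rw [stmt8_pairL_single_pos] at hle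
      have hn : ‖EuclideanSpace.single i (1:ℝ)‖ ≤ 1 := by
        rw [EuclideanSpace.norm_single]; simp
      have h4 : -dplus φ x i - L (latE d (N+1) x) (EuclideanSpace.single i (1:ℝ)) ≤ c0 := by
        simpa [negDeltaN] using hle.trans hH
      rw [hc3]; linarith [hLmem _ hn]
    · have hle : pairL (negDeltaN φ x) (EuclideanSpace.single i (-1:ℝ))
          - L (latE d (N+1) x) (EuclideanSpace.single i (-1:ℝ)) ≤ HNlat L x (negDeltaN φ x) :=
        le_ciSup hba _
      rw [stmt8_pairL_single_neg] at hle
      have hn : ‖EuclideanSpace.single i (-1:ℝ)‖ ≤ 1 := by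
        rw [EuclideanSpace.norm_single]; simp
      have h4 : -dminus φ x i - L (latE d (N+1) x) (EuclideanSpace.single i (-1:ℝ)) ≤ c0 := by
        simpa [negDeltaN] using hle.trans hH
      rw [hc3]; linarith [hLmem _ hn]
  -- shift identities give two-sided bounds
  have habs : ∀ (x : Fin d → ZMod (N+1)) (i : Fin d),
      |dplus φ x i| ≤ c3 ∧ |dminus φ x i| ≤ c3 := by
    intro x i
    have h1 := (key x i).1
    have h2 := (key x i).2
    have h3 : dplus φ x i = -dminus φ (x + Pi.single i 1) i := by
      have hxx : x + Pi.single i 1 - Pi.single i 1 = x := by abel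
      rw [dplus, dminus, hxx]; ring
    have h4 : dminus φ x i = -dplus φ (x - Pi.single i 1) i := by
      have hxx : x - Pi.single i 1 + Pi.single i 1 = x := by abel
      rw [dplus, dminus, hxx]; ring
    have h5 := (key (x + Pi.single i 1) i).2
    have h6 := (key (x - Pi.single i 1) i).1
    constructor
    · rw [abs_le]; constructor
      · linarith
      · rw [h3]; linarith
    · rw [abs_le]; constructor
      · linarith
      · rw [h4]; linarith
  refine ⟨habs, ?_⟩
  -- step bounds
  have hstep : ∀ (x : Fin d → ZMod (N+1)) (i : Fin d),
      |φ (x + Pi.single i 1) - φ x| ≤ c3 / ((N + 1 : ℕ) : ℝ) := by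
    intro x i
    have h := (habs x i).1
    rw [dplus, abs_mul, abs_of_pos hN1pos] at h
    rw [le_div_iff₀ hN1pos]
    linarith
  have hstep' : ∀ (x : Fin d → ZMod (N+1)) (i : Fin d),
      |φ (x - Pi.single i 1) - φ x| ≤ c3 / ((N + 1 : ℕ) : ℝ) := by
    intro x i
    have h := (habs x i).2
    rw [dminus, abs_mul, abs_of_pos hN1pos] at h
    rw [le_div_iff₀ hN1pos]
    linarith
  -- single-coordinate multi-step bound
  have hline : ∀ (m : ℤ) (x : Fin d → ZMod (N+1)) (i : Fin d),
      |φ (x + Pi.single i ((m : ZMod (N+1)))) - φ x| ≤ (c3 / ((N + 1 : ℕ) : ℝ)) * |(m : ℝ)| := by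
    intro m
    induction m using Int.induction_on with
    | zero => intro x i; simp
    | succ n ih =>
        intro x i
        have hc3nn : 0 ≤ c3 := le_trans (abs_nonneg _) (habs x i).1
        have hsplit : x + Pi.single i (((n : ℤ) + 1 : ℤ) : ZMod (N+1))
            = (x + Pi.single i ((n : ℤ) : ZMod (N+1))) + Pi.single i 1 := by
          have hc : (((n : ℤ) + 1 : ℤ) : ZMod (N+1)) = ((n : ℤ) : ZMod (N+1)) + 1 := by
            push_cast; ring
          rw [hc, Pi.single_add]; abel
        have tri : |φ (x + Pi.single i (((n : ℤ) + 1 : ℤ) : ZMod (N+1))) - φ x|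
            ≤ |φ ((x + Pi.single i ((n : ℤ) : ZMod (N+1))) + Pi.single i 1)
                - φ (x + Pi.single i ((n : ℤ) : ZMod (N+1)))|
              + |φ (x + Pi.single i ((n : ℤ) : ZMod (N+1))) - φ x| := by
          rw [hsplit]; exact abs_sub_le _ _ _
        have h1 : |((n : ℤ) : ℝ)| = (n : ℝ) := by
          push_cast; exact abs_of_nonneg (by positivity)
        have h2 : |(((n : ℤ) + 1 : ℤ) : ℝ)| = (n : ℝ) + 1 := by
          push_cast; exact abs_of_nonneg (by positivity)
        have hC : 0 ≤ c3 / ((N + 1 : ℕ) : ℝ) := by positivity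
        have hihn := ih x i
        rw [h1] at hihn
        rw [h2]
        have hs := hstep (x + Pi.single i ((n : ℤ) : ZMod (N+1))) i
        calc |φ (x + Pi.single i (((n : ℤ) + 1 : ℤ) : ZMod (N+1))) - φ x|
            ≤ c3 / ((N + 1 : ℕ) : ℝ) + (c3 / ((N + 1 : ℕ) : ℝ)) * (n : ℝ) :=
              tri.trans (add_le_add hs hihn)
          _ = (c3 / ((N + 1 : ℕ) : ℝ)) * ((n : ℝ) + 1) := by ring
    | pred n ih =>
        intro x i
        have hc3nn : 0 ≤ c3 := le_trans (abs_nonneg _) (habs x i).1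
        have hsplit : x + Pi.single i ((-(n : ℤ) - 1 : ℤ) : ZMod (N+1))
            = (x + Pi.single i ((-(n : ℤ) : ℤ) : ZMod (N+1))) - Pi.single i 1 := by
          have hc : ((-(n : ℤ) - 1 : ℤ) : ZMod (N+1))
              = ((-(n : ℤ) : ℤ) : ZMod (N+1)) + (-1) := by push_cast; ring
          rw [hc, Pi.single_add]
          have hneg : (Pi.single i (-1 : ZMod (N+1)) : Fin d → ZMod (N+1))
              = -Pi.single i 1 := by rw [← Pi.single_neg]
          rw [hneg]; abel
        have tri : |φ (x + Pi.single i ((-(n : ℤ) - 1 : ℤ) : ZMod (N+1))) - φ x|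
            ≤ |φ ((x + Pi.single i ((-(n : ℤ) : ℤ) : ZMod (N+1))) - Pi.single i 1)
                - φ (x + Pi.single i ((-(n : ℤ) : ℤ) : ZMod (N+1)))|
              + |φ (x + Pi.single i ((-(n : ℤ) : ℤ) : ZMod (N+1))) - φ x| := by
          rw [hsplit]; exact abs_sub_le _ _ _
        have h1 : |((-(n : ℤ) : ℤ) : ℝ)| = (n : ℝ) := by
          push_cast; rw [abs_neg]; exact abs_of_nonneg (by positivity)
        have h2 : |((-(n : ℤ) - 1 : ℤ) : ℝ)| = (n : ℝ) + 1 := by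
          push_cast
          rw [show -(n : ℝ) - 1 = -((n : ℝ) + 1) by ring, abs_neg]
          exact abs_of_nonneg (by positivity)
        have hihn := ih x i
        rw [h1] at hihn
        rw [h2]
        have hs := hstep' (x + Pi.single i ((-(n : ℤ) : ℤ) : ZMod (N+1))) i
        calc |φ (x + Pi.single i ((-(n : ℤ) - 1 : ℤ) : ZMod (N+1))) - φ x|
            ≤ c3 / ((N + 1 : ℕ) : ℝ) + (c3 / ((N + 1 : ℕ) : ℝ)) * (n : ℝ) :=
              tri.trans (add_le_add hs hihn)
          _ = (c3 / ((N + 1 : ℕ) : ℝ)) * ((n : ℝ) + 1) := by ring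
  -- multi-coordinate path bound
  have hpath : ∀ (s : Finset (Fin d)) (k : Fin d → ℤ) (x : Fin d → ZMod (N+1)),
      |φ (x + ∑ i ∈ s, Pi.single i ((k i : ZMod (N+1)))) - φ x|
        ≤ (c3 / ((N + 1 : ℕ) : ℝ)) * ∑ i ∈ s, |(k i : ℝ)| := by
    intro s
    induction s using Finset.induction_on with
    | empty => intro k x; simp
    | @insert j s hj ih =>
        intro k x
        rw [Finset.sum_insert hj, Finset.sum_insert hj]
        have hsplit : x + (Pi.single j ((k j : ZMod (N+1)))
              + ∑ i ∈ s, Pi.single i ((k i : ZMod (N+1))))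
            = (x + ∑ i ∈ s, Pi.single i ((k i : ZMod (N+1))))
              + Pi.single j ((k j : ZMod (N+1))) := by abel
        have tri : |φ (x + (Pi.single j ((k j : ZMod (N+1)))
              + ∑ i ∈ s, Pi.single i ((k i : ZMod (N+1))))) - φ x|
            ≤ |φ ((x + ∑ i ∈ s, Pi.single i ((k i : ZMod (N+1))))
                  + Pi.single j ((k j : ZMod (N+1))))
                - φ (x + ∑ i ∈ s, Pi.single i ((k i : ZMod (N+1))))|
              + |φ (x + ∑ i ∈ s, Pi.single i ((k i : ZMod (N+1)))) - φ x| := by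
          rw [hsplit]; exact abs_sub_le _ _ _
        rw [mul_add]
        exact tri.trans (add_le_add (hline (k j) _ j) (ih k x))
  -- Lipschitz bound
  intro x y
  set c3' := max c3 0 with hc3'
  have hc3'nn : (0:ℝ) ≤ c3' := le_max_right _ _
  set Sd := {r : ℝ | ∃ k : Fin d → ℤ, (∀ i, ((k i : ZMod (N+1)) = y i - x i)) ∧
    r = Real.sqrt (∑ i, ((k i : ℝ) / ((N + 1 : ℕ) : ℝ)) ^ 2)} with hSd
  have hSdne : Sd.Nonempty := by
    refine ⟨_, fun i => ((y i - x i).val : ℤ), fun i => ?_, rfl⟩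
    push_cast
    exact ZMod.natCast_rightInverse _
  have hmain : ∀ r ∈ Sd, |φ x - φ y| ≤ (Real.sqrt d * c3') * r := by
    rintro r ⟨k, hk, rfl⟩
    have hy : y = x + ∑ i, Pi.single i ((k i : ZMod (N+1))) := by
      funext j
      have hj : (∑ i, Pi.single i ((k i : ZMod (N+1)))) j = (k j : ZMod (N+1)) := by
        rw [Finset.univ_sum_single (f := fun i => ((k i : ZMod (N+1))))]
      simp only [Pi.add_apply, hj, hk j]
      ring
    have h1 : |φ x - φ y| ≤ (c3 / ((N + 1 : ℕ) : ℝ)) * ∑ i, |(k i : ℝ)| := by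
      rw [abs_sub_comm, hy]
      exact hpath Finset.univ k x
    have h2 : (c3 / ((N + 1 : ℕ) : ℝ)) * ∑ i, |(k i : ℝ)|
        ≤ (c3' / ((N + 1 : ℕ) : ℝ)) * ∑ i, |(k i : ℝ)| := by
      apply mul_le_mul_of_nonneg_right _ (Finset.sum_nonneg fun i _ => abs_nonneg _)
      gcongr
      exact le_max_left _ _
    -- Cauchy-Schwarz
    have hcs : ∑ i, |(k i : ℝ)| ≤ Real.sqrt d * Real.sqrt (∑ i, (k i : ℝ) ^ 2) := by
      have h := sq_sum_le_card_mul_sum_sq (s := (Finset.univ : Finset (Fin d)))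
        (f := fun i => |(k i : ℝ)|)
      simp only [Finset.card_univ, Fintype.card_fin, sq_abs] at h
      have h3 : ∑ i, |(k i : ℝ)| = Real.sqrt ((∑ i, |(k i : ℝ)|) ^ 2) := by
        rw [Real.sqrt_sq (Finset.sum_nonneg fun i _ => abs_nonneg _)]
      rw [h3, ← Real.sqrt_mul (by positivity)]
      exact Real.sqrt_le_sqrt (by exact_mod_cast h)
    have hr : Real.sqrt (∑ i, (k i : ℝ) ^ 2)
        = ((N + 1 : ℕ) : ℝ) * Real.sqrt (∑ i, ((k i : ℝ) / ((N + 1 : ℕ) : ℝ)) ^ 2) := by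
      rw [← Real.sqrt_sq hN1pos.le, ← Real.sqrt_mul (by positivity), Finset.mul_sum]
      congr 1
      apply Finset.sum_congr rfl
      intro i _
      field_simp
      rw [Real.sq_sqrt (by positivity)]
    calc |φ x - φ y| ≤ (c3' / ((N + 1 : ℕ) : ℝ)) * ∑ i, |(k i : ℝ)| := h1.trans h2
      _ ≤ (c3' / ((N + 1 : ℕ) : ℝ)) * (Real.sqrt d * Real.sqrt (∑ i, (k i : ℝ) ^ 2)) :=
          mul_le_mul_of_nonneg_left hcs (by positivity)
      _ = (Real.sqrt d * c3') * Real.sqrt (∑ i, ((k i : ℝ) / ((N + 1 : ℕ) : ℝ)) ^ 2) := by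
          rw [hr]; field_simp
  have hc4nn : 0 ≤ Real.sqrt d * c3' := by positivity
  have hfin : |φ x - φ y| ≤ (Real.sqrt d * c3') * sInf Sd := by
    rw [← smul_eq_mul, ← Real.sInf_smul_of_nonneg hc4nn]
    apply le_csInf (hSdne.smul_set)
    rintro b ⟨r, hr, rfl⟩
    exact hmain r hr
  exact hfin
end
end

section
/- Suppose φ : Λ_N → ℝ satisfies |Δ^+_{N,i}φ(x)|, |Δ^-_{N,i}φ(x)| ≤ c₃ for all x ∈ Λ_N and i ∈ {1,…,d}, and let π*(x) ∈ Argmax_{v∈ℝ^d}[(−Δ_N)φ(x)·v − L(x,v)] with 𝓗_N(x, (−Δ_N)φ(x)) ≤ c₀ for all x. Then |π*(x)| ≤ c₅ := c₀ − g(√d·c₃ + 1) for all x ∈ Λ_N. -/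
open scoped BigOperators RealInnerProductSpace
open MeasureTheory Filter

noncomputable section

/-- if `|Δ^±_{N,i}φ| ≤ c₃`, `π*(x)` achieves the max defining
`𝓗_N(x,(−Δ_N)φ(x))` and `|𝓗_N(x,(−Δ_N)φ(x))| ≤ c₀`, then
`|π*(x)| ≤ c₅ := c₀ − g(√d·c₃ + 1)`. -/
theorem stmt9 (d N : ℕ) [NeZero N] (L : Evec d → Evec d → ℝ) (g : ℝ → ℝ)
    (hsl : ∀ a : ℝ, 0 ≤ a → ∀ (x v : Evec d), a * ‖v‖ + g a ≤ L x v)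
    (φ : (Fin d → ZMod N) → ℝ) (c0 c3 : ℝ) (hc3 : 0 ≤ c3)
    (hΔ : ∀ x i, |dplus φ x i| ≤ c3 ∧ |dminus φ x i| ≤ c3)
    (π : (Fin d → ZMod N) → Evec d)
    (hopt : ∀ x, pairL (negDeltaN φ x) (π x) - L (latE d N x) (π x)
      = HNlat L x (negDeltaN φ x))
    (hH : ∀ x, |HNlat L x (negDeltaN φ x)| ≤ c0) :
    ∀ x, ‖π x‖ ≤ c0 - g (Real.sqrt d * c3 + 1) := by

  intro x
  set a := Real.sqrt d * c3 + 1 with ha_def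
  have hsd : (0:ℝ) ≤ Real.sqrt d := Real.sqrt_nonneg _
  have ha : 0 ≤ a := by positivity
  have hL := hsl a ha (latE d N x) (π x)
  -- bound the pairing
  have hsum : ∑ i, |π x i| ≤ Real.sqrt d * ‖π x‖ := by
    have hcs := Finset.sum_mul_sq_le_sq_mul_sq Finset.univ (fun _ : Fin d => (1:ℝ))
      (fun i => |π x i|)
    simp only [one_pow, one_mul, Finset.sum_const, Finset.card_univ, Fintype.card_fin,
      nsmul_eq_mul, mul_one] at hcs
    have hnorm : ‖π x‖ = Real.sqrt (∑ i, |π x i| ^ 2) := by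
      rw [EuclideanSpace.norm_eq]
      simp [Real.norm_eq_abs]
    have h1 : (∑ i, |π x i|) ^ 2 ≤ (Real.sqrt d * ‖π x‖) ^ 2 := by
      rw [mul_pow, hnorm, Real.sq_sqrt (by positivity : (0:ℝ) ≤ (d:ℝ)),
        Real.sq_sqrt (by positivity : (0:ℝ) ≤ ∑ i, |π x i| ^ 2)]
      exact hcs
    have h2 : (0:ℝ) ≤ ∑ i, |π x i| := Finset.sum_nonneg fun i _ => abs_nonneg _
    calc ∑ i, |π x i| = Real.sqrt ((∑ i, |π x i|) ^ 2) := (Real.sqrt_sq h2).symm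
      _ ≤ Real.sqrt ((Real.sqrt d * ‖π x‖) ^ 2) := Real.sqrt_le_sqrt h1
      _ = Real.sqrt d * ‖π x‖ := Real.sqrt_sq (by positivity)
  have hpair : pairL (negDeltaN φ x) (π x) ≤ Real.sqrt d * c3 * ‖π x‖ := by
    have hterm : ∀ i, (negDeltaN φ x i).1 * max (π x i) 0
        + (negDeltaN φ x i).2 * max (-(π x i)) 0 ≤ c3 * |π x i| := by
      intro i
      have h1 := (hΔ x i).1
      have h2 := (hΔ x i).2
      have hp : max (π x i) 0 + max (-(π x i)) 0 = |π x i| := by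
        rcases le_total (π x i) 0 with h | h
        · rw [max_eq_right h, max_eq_left (by linarith), abs_of_nonpos h]; ring
        · rw [max_eq_left h, max_eq_right (by linarith), abs_of_nonneg h]; ring
      have e1 : (negDeltaN φ x i).1 * max (π x i) 0 ≤ c3 * max (π x i) 0 := by
        apply mul_le_mul_of_nonneg_right _ (le_max_right _ _)
        simp only [negDeltaN]
        have := abs_le.mp h1
        linarith [this.1]
      have e2 : (negDeltaN φ x i).2 * max (-(π x i)) 0 ≤ c3 * max (-(π x i)) 0 := by
        apply mul_le_mul_of_nonneg_right _ (le_max_right _ _)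
        simp only [negDeltaN]
        have := abs_le.mp h2
        linarith [this.1]
      calc (negDeltaN φ x i).1 * max (π x i) 0 + (negDeltaN φ x i).2 * max (-(π x i)) 0
          ≤ c3 * max (π x i) 0 + c3 * max (-(π x i)) 0 := by linarith
        _ = c3 * |π x i| := by rw [← hp]; ring
    calc pairL (negDeltaN φ x) (π x) ≤ ∑ i, c3 * |π x i| :=
          Finset.sum_le_sum fun i _ => hterm i
      _ = c3 * ∑ i, |π x i| := by rw [Finset.mul_sum]
      _ ≤ c3 * (Real.sqrt d * ‖π x‖) := mul_le_mul_of_nonneg_left hsum hc3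
      _ = Real.sqrt d * c3 * ‖π x‖ := by ring
  have hlow : -c0 ≤ HNlat L x (negDeltaN φ x) := (abs_le.mp (hH x)).1
  have heq := hopt x
  -- a‖π‖ + g a ≤ L ≤ pairL - HNlat ≤ √d c3 ‖π‖ + c0
  have : (Real.sqrt d * c3 + 1) * ‖π x‖ + g a ≤ Real.sqrt d * c3 * ‖π x‖ + c0 := by
    calc (Real.sqrt d * c3 + 1) * ‖π x‖ + g a = a * ‖π x‖ + g a := by rw [ha_def]
      _ ≤ L (latE d N x) (π x) := hL
      _ = pairL (negDeltaN φ x) (π x) - HNlat L x (negDeltaN φ x) := by linarith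
      _ ≤ Real.sqrt d * c3 * ‖π x‖ + c0 := by linarith
  linarith
end
end
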